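/- Every independent set of stabilizers on N qubits is contained in a complete independent set of stabilizers on N qubits, i.e., one with exactly N elements. -/

import Mathlib

noncomputable section

/-- The space of operators (matrices) on the `N`-qubit Hilbert space. -/
abbrev QMat (N : ℕ) := Matrix (Fin N → Fin 2) (Fin N → Fin 2) ℂ

def pauliSx : Matrix (Fin 2) (Fin 2) ℂ := !![0, 1; 1, 0]
def pauliSy : Matrix (Fin 2) (Fin 2) ℂ := !![0, -Complex.I; Complex.I, 0]
def pauliSz : Matrix (Fin 2) (Fin 2) ℂ := !![1, 0; 0, -1]

/-- A Pauli operator on `N` qubits: a ±1-signed tensor product of single-qubit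
Pauli matrices `1, σx, σy, σz`. -/
def IsPauli {N : ℕ} (M : QMat N) : Prop :=
  ∃ (ε : ℂ) (P : Fin N → Matrix (Fin 2) (Fin 2) ℂ),
    (ε = 1 ∨ ε = -1) ∧
    (∀ j, P j = 1 ∨ P j = pauliSx ∨ P j = pauliSy ∨ P j = pauliSz) ∧
    ∀ s t, M s t = ε * ∏ j, P j (s j) (t j)

/-- A set of stabilizers: pairwise commuting Pauli operators whose generated
multiplicative group (equivalently, monoid, since each element is an involution)
does not contain `-1`. -/
def IsStabilizerSet {N : ℕ} (S : Set (QMat N)) : Prop :=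
  (∀ M ∈ S, IsPauli M) ∧
  (∀ M ∈ S, ∀ M' ∈ S, M * M' = M' * M) ∧
  (-1 : QMat N) ∉ Submonoid.closure S

/-- An independent set of stabilizers: the product of every nonempty finite subset
(encoded as a nodup list of elements of `S`) is not a complex scalar multiple of
the identity matrix. -/
def IsIndependentSet {N : ℕ} (S : Set (QMat N)) : Prop :=
  IsStabilizerSet S ∧
  ∀ L : List (QMat N), L ≠ [] → L.Nodup → (∀ A ∈ L, A ∈ S) →
    ∀ c : ℂ, L.prod ≠ c • (1 : QMat N)

/-- A complete independent set of stabilizers: an independent set with exactly `N` elements. -/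
def IsCompleteSet {N : ℕ} (S : Set (QMat N)) : Prop :=
  IsIndependentSet S ∧ S.ncard = N

namespace Stab

open scoped Classical

open Complex

def P (a : ZMod 2 × ZMod 2) : Matrix (Fin 2) (Fin 2) ℂ :=
  if a.1 = 0 then (if a.2 = 0 then 1 else pauliSz)
  else (if a.2 = 0 then pauliSx else pauliSy)

def mu (a b : ZMod 2 × ZMod 2) : ℂ :=
  if a = (0,0) ∨ b = (0,0) ∨ a = b then 1
  else if (a,b) = ((1,0),(1,1)) ∨ (a,b) = ((1,1),(0,1)) ∨ (a,b) = ((0,1),(1,0)) then Complex.I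
  else -Complex.I

def sp1 (a b : ZMod 2 × ZMod 2) : ZMod 2 := a.1 * b.2 + a.2 * b.1

lemma zmod2_cases (a : ZMod 2 × ZMod 2) :
    a = ((0:ZMod 2),(0:ZMod 2)) ∨ a = (1,0) ∨ a = (0,1) ∨ a = (1,1) := by revert a; decide

lemma mu_ne_zero (a b : ZMod 2 × ZMod 2) : mu a b ≠ 0 := by
  unfold mu; split_ifs <;> simp [Complex.I_ne_zero]

lemma P_mul (a b : ZMod 2 × ZMod 2) : P a * P b = mu a b • P (a + b) := by
  rcases zmod2_cases a with ha|ha|ha|ha <;> rcases zmod2_cases b with hb|hb|hb|hb <;>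
    subst ha hb <;>
    · ext i j
      fin_cases i <;> fin_cases j <;>
        simp (config := {decide := true}) [P, mu, pauliSx, pauliSy, pauliSz,
          Matrix.mul_apply, Fin.sum_univ_two, Matrix.one_apply] <;>
        ring_nf <;> simp [Complex.I_sq]


lemma P_zero : P 0 = 1 := by
  show (if (0:ZMod 2) = 0 then (if (0:ZMod 2) = 0 then 1 else pauliSz)
    else (if (0:ZMod 2) = 0 then pauliSx else pauliSy)) = 1
  simp

lemma prod_add_self (a : ZMod 2 × ZMod 2) : a + a = 0 := by revert a; decide

lemma mu_self (a : ZMod 2 × ZMod 2) : mu a a = 1 := by simp [mu]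

lemma P_sq (a : ZMod 2 × ZMod 2) : P a * P a = 1 := by
  rw [P_mul, mu_self, prod_add_self, one_smul, P_zero]

lemma mu_comm (a b : ZMod 2 × ZMod 2) :
    mu a b = (-1 : ℂ) ^ (sp1 a b).val * mu b a := by
  rcases zmod2_cases a with ha|ha|ha|ha <;> rcases zmod2_cases b with hb|hb|hb|hb <;>
    subst ha hb <;>
    simp (config := {decide := true}) [mu, sp1] <;> norm_num

lemma P_trace (a : ZMod 2 × ZMod 2) (h : a ≠ 0) : ∑ x : Fin 2, P a x x = 0 := by
  rcases zmod2_cases a with ha|ha|ha|ha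
  · exact absurd (ha.trans (by decide)) h
  all_goals subst ha
  all_goals simp (config := {decide := true}) [P, pauliSx, pauliSy, pauliSz, Fin.sum_univ_two]

lemma P_trace_zero : ∑ x : Fin 2, P 0 x x = 2 := by
  rw [P_zero]; simp [Fin.sum_univ_two, Matrix.one_apply]

lemma P_entry (a : ZMod 2 × ZMod 2) (s : Fin 2) : ∃ t, P a s t ≠ 0 := by
  have tac : ∀ (b : ZMod 2 × ZMod 2) (u w : Fin 2), P b u w ≠ 0 → ∃ t, P b u t ≠ 0 :=
    fun b u w h => ⟨w, h⟩
  rcases zmod2_cases a with ha|ha|ha|ha <;> subst ha <;> fin_cases s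
  · exact ⟨0, by simp (config := {decide := true}) [P, Matrix.one_apply]⟩
  · exact ⟨1, by simp (config := {decide := true}) [P, Matrix.one_apply]⟩
  · exact ⟨1, by simp (config := {decide := true}) [P, pauliSx]⟩
  · exact ⟨0, by simp (config := {decide := true}) [P, pauliSx]⟩
  · exact ⟨0, by simp (config := {decide := true}) [P, pauliSz]⟩
  · exact ⟨1, by simp (config := {decide := true}) [P, pauliSz]⟩
  · exact ⟨1, by simp (config := {decide := true}) [P, pauliSy, Complex.I_ne_zero]⟩
  · exact ⟨0, by simp (config := {decide := true}) [P, pauliSy, Complex.I_ne_zero]⟩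

lemma P_vals : P ((0:ZMod 2),(0:ZMod 2)) = 1 ∧ P ((1:ZMod 2),(0:ZMod 2)) = pauliSx ∧
    P ((0:ZMod 2),(1:ZMod 2)) = pauliSz ∧ P ((1:ZMod 2),(1:ZMod 2)) = pauliSy := by
  refine ⟨?_, ?_, ?_, ?_⟩ <;> simp (config := {decide := true}) [P]

section Kron

variable {N : ℕ}

abbrev V (N : ℕ) := Fin N → ZMod 2 × ZMod 2

def kron (Q : Fin N → Matrix (Fin 2) (Fin 2) ℂ) : QMat N :=
  fun s t => ∏ j, Q j (s j) (t j)

lemma kron_mul (Q R : Fin N → Matrix (Fin 2) (Fin 2) ℂ) :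
    kron Q * kron R = kron (fun j => Q j * R j) := by
  ext s t
  simp only [kron, Matrix.mul_apply, ← Finset.prod_mul_distrib]
  rw [Finset.prod_univ_sum, Fintype.piFinset_univ]

lemma kron_one : kron (fun _ : Fin N => (1 : Matrix (Fin 2) (Fin 2) ℂ)) = 1 := by
  ext s t
  by_cases h : s = t
  · subst h; simp [kron, Matrix.one_apply]
  · have : ∃ j, s j ≠ t j := by
      by_contra hc; push_neg at hc; exact h (funext hc)
    obtain ⟨j, hj⟩ := this
    rw [show (1 : QMat N) s t = 0 from by simp [Matrix.one_apply, h]]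
    exact Finset.prod_eq_zero (Finset.mem_univ j) (by simp [Matrix.one_apply, hj])

lemma kron_smul (c : Fin N → ℂ) (Q : Fin N → Matrix (Fin 2) (Fin 2) ℂ) :
    kron (fun j => c j • Q j) = (∏ j, c j) • kron Q := by
  ext s t
  simp [kron, Finset.prod_mul_distrib]

def Wop (v : V N) : QMat N := kron (fun j => P (v j))

lemma Wop_zero : Wop (0 : V N) = 1 := by
  unfold Wop
  rw [show (fun j : Fin N => P ((0:V N) j)) = fun _ => 1 from funext fun j => P_zero]
  exact kron_one

lemma Wop_mul (v w : V N) : Wop v * Wop w = (∏ j, mu (v j) (w j)) • Wop (v + w) := by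
  unfold Wop
  rw [kron_mul]
  rw [show (fun j => P (v j) * P (w j)) = fun j => mu (v j) (w j) • P ((v + w) j) from
    funext fun j => by rw [P_mul]; rfl]
  exact kron_smul _ _

lemma Wop_mul' (v w : V N) : ∃ c : ℂ, c ≠ 0 ∧ Wop v * Wop w = c • Wop (v + w) :=
  ⟨∏ j, mu (v j) (w j), Finset.prod_ne_zero_iff.2 fun j _ => mu_ne_zero _ _, Wop_mul v w⟩

lemma Wop_sq (v : V N) : Wop v * Wop v = 1 := by
  unfold Wop
  rw [kron_mul]
  rw [show (fun j => P (v j) * P (v j)) = fun _ => 1 from funext fun j => P_sq _]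
  exact kron_one

lemma Wop_ne_zero (v : V N) : ∃ s t, Wop v s t ≠ 0 := by
  have h : ∀ j : Fin N, ∃ t, P (v j) 0 t ≠ 0 := fun j => P_entry (v j) 0
  choose t ht using h
  refine ⟨fun _ => 0, t, ?_⟩
  show (∏ j, P (v j) 0 (t j)) ≠ 0
  exact Finset.prod_ne_zero_iff.2 fun j _ => ht j

def tr (M : QMat N) : ℂ := ∑ s, M s s

lemma tr_kron (Q : Fin N → Matrix (Fin 2) (Fin 2) ℂ) :
    tr (kron Q) = ∏ j, ∑ x : Fin 2, Q j x x := by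
  unfold tr kron
  rw [Finset.prod_univ_sum, Fintype.piFinset_univ]

lemma tr_smul_one (c : ℂ) : tr (c • (1 : QMat N)) = c * 2 ^ N := by
  unfold tr
  simp [Matrix.smul_apply, Matrix.one_apply, Finset.sum_const, Finset.card_univ, mul_comm]

lemma Wop_eq_scalar {v : V N} {c : ℂ} (h : Wop v = c • 1) : v = 0 ∧ c = 1 := by
  have hv : v = 0 := by
    by_contra hv
    obtain ⟨j, hj⟩ : ∃ j, v j ≠ 0 := by
      by_contra h'; push_neg at h'; exact hv (funext h')
    have h1 : tr (Wop v) = 0 := by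
      unfold Wop; rw [tr_kron]
      exact Finset.prod_eq_zero (Finset.mem_univ j) (P_trace _ hj)
    have h2 : tr (Wop v) = c * 2 ^ N := by rw [h, tr_smul_one]
    have hc : c = 0 := by
      have h2N : (2 : ℂ) ^ N ≠ 0 := pow_ne_zero _ two_ne_zero
      have := h1.symm.trans h2
      exact (mul_eq_zero.1 this.symm).resolve_right h2N
    obtain ⟨s, t, hst⟩ := Wop_ne_zero v
    rw [h, hc] at hst
    simp at hst
  refine ⟨hv, ?_⟩
  subst hv
  rw [Wop_zero] at h
  have := congrFun (congrFun h (fun _ => 0)) (fun _ => 0)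
  simpa [Matrix.one_apply] using this.symm

lemma vadd_self (v : V N) : v + v = 0 := funext fun j => prod_add_self (v j)

lemma eq_of_vadd_eq_zero {v w : V N} (h : v + w = 0) : v = w := by
  calc v = v + (w + w) := by rw [vadd_self, add_zero]
    _ = (v + w) + w := (add_assoc v w w).symm
    _ = w := by rw [h, zero_add]

def sp (v w : V N) : ZMod 2 := ∑ j, sp1 (v j) (w j)

lemma val_cast (a : ZMod 2) : ((a.val : ℕ) : ZMod 2) = a := by revert a; decide

lemma neg_one_pow_par (m k : ℕ) (h : (m : ZMod 2) = (k : ZMod 2)) :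
    ((-1 : ℂ)) ^ m = (-1) ^ k := by
  have hmk : m % 2 = k % 2 := (ZMod.natCast_eq_natCast_iff' m k 2).1 h
  conv_lhs => rw [← Nat.div_add_mod m 2]
  conv_rhs => rw [← Nat.div_add_mod k 2]
  rw [pow_add, pow_add, pow_mul, pow_mul, neg_one_sq, one_pow, one_pow, hmk]

lemma Wop_comm (v w : V N) :
    Wop v * Wop w = (-1 : ℂ) ^ (sp v w).val • (Wop w * Wop v) := by
  rw [Wop_mul, Wop_mul, add_comm w v, smul_smul]
  congr 1
  calc ∏ j, mu (v j) (w j)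
      = ∏ j, ((-1 : ℂ) ^ (sp1 (v j) (w j)).val * mu (w j) (v j)) :=
        Finset.prod_congr rfl fun j _ => mu_comm _ _
    _ = (∏ j, (-1 : ℂ) ^ (sp1 (v j) (w j)).val) * ∏ j, mu (w j) (v j) :=
        Finset.prod_mul_distrib
    _ = (-1 : ℂ) ^ (sp v w).val * ∏ j, mu (w j) (v j) := by
        rw [Finset.prod_pow_eq_pow_sum]
        congr 1
        apply neg_one_pow_par
        push_cast [val_cast]
        rfl

lemma Wop_commute_of_sp (h : sp v w = 0) : Wop v * Wop w = Wop w * Wop v := by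
  rw [Wop_comm, h]; simp

lemma sp_of_commute {v w : V N} (h : Wop v * Wop w = Wop w * Wop v) : sp v w = 0 := by
  have h01 : sp v w = 0 ∨ sp v w = 1 := by
    rcases (show ∀ a : ZMod 2, a = 0 ∨ a = 1 from by decide) (sp v w) with h|h
    · exact Or.inl h
    · exact Or.inr h
  rcases h01 with h0|h1
  · exact h0
  · exfalso
    have hc := Wop_comm v w
    rw [h1, h] at hc
    obtain ⟨μ, hμ, hWW⟩ := Wop_mul' w v
    obtain ⟨s, t, hst⟩ := Wop_ne_zero (w + v)
    have : Wop w * Wop v = -(Wop w * Wop v) := by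
      simpa [ZMod.val_one] using hc
    have h2 := congrFun (congrFun (this.trans (congrArg Neg.neg hWW)) s) t
    rw [congrFun (congrFun hWW s) t] at h2
    simp only [Matrix.smul_apply, Matrix.neg_apply, smul_eq_mul] at h2
    have : (2 : ℂ) * (μ * Wop (w + v) s t) = 0 := by ring_nf; linear_combination h2
    rcases mul_eq_zero.1 this with h3 | h3
    · norm_num at h3
    · exact mul_ne_zero hμ hst h3

def PauliDecomp (M : QMat N) : Prop :=
  ∃ p : ℂ × V N, (p.1 = 1 ∨ p.1 = -1) ∧ M = p.1 • Wop p.2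

lemma isPauli_decomp {M : QMat N} (h : IsPauli M) : PauliDecomp M := by
  obtain ⟨ε, Q, hε, hQ, hM⟩ := h
  have hex : ∀ j, ∃ a, Q j = P a := fun j => by
    rcases hQ j with h|h|h|h
    · exact ⟨((0:ZMod 2),(0:ZMod 2)), h.trans P_vals.1.symm⟩
    · exact ⟨((1:ZMod 2),(0:ZMod 2)), h.trans P_vals.2.1.symm⟩
    · exact ⟨((1:ZMod 2),(1:ZMod 2)), h.trans P_vals.2.2.2.symm⟩
    · exact ⟨((0:ZMod 2),(1:ZMod 2)), h.trans P_vals.2.2.1.symm⟩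
  choose v hv using hex
  refine ⟨(ε, v), hε, ?_⟩
  ext s t
  rw [hM]
  simp only [Matrix.smul_apply, Wop, kron, smul_eq_mul]
  congr 1
  exact Finset.prod_congr rfl fun j _ => by rw [hv j]

lemma decomp_isPauli {M : QMat N} (h : PauliDecomp M) : IsPauli M := by
  obtain ⟨⟨ε, v⟩, hε, rfl⟩ := h
  refine ⟨ε, fun j => P (v j), hε, fun j => ?_, fun s t => ?_⟩
  · show P (v j) = 1 ∨ P (v j) = pauliSx ∨ P (v j) = pauliSy ∨ P (v j) = pauliSz
    rcases zmod2_cases (v j) with h|h|h|h <;> rw [h]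
    · exact Or.inl P_vals.1
    · exact Or.inr (Or.inl P_vals.2.1)
    · exact Or.inr (Or.inr (Or.inr P_vals.2.2.1))
    · exact Or.inr (Or.inr (Or.inl P_vals.2.2.2))
  · simp only [Matrix.smul_apply, Wop, kron, smul_eq_mul]

lemma scalar_Wop_eq {c d : ℂ} {v w : V N} (hc : c ≠ 0)
    (h : c • Wop v = d • Wop w) : v = w ∧ c = d := by
  obtain ⟨μ, hμ, hWW⟩ := Wop_mul' v w
  have h1 : c • (Wop v * Wop w) = d • (Wop w * Wop w) := by
    rw [← smul_mul_assoc, h, smul_mul_assoc]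
  rw [hWW, Wop_sq, smul_smul] at h1
  have h2 : Wop (v + w) = ((c * μ)⁻¹ * d) • (1 : QMat N) := by
    rw [← smul_smul, ← h1, smul_smul, inv_mul_cancel₀ (mul_ne_zero hc hμ), one_smul]
  have hvw := (Wop_eq_scalar h2).1
  have hv : v = w := eq_of_vadd_eq_zero hvw
  subst hv
  refine ⟨rfl, ?_⟩
  obtain ⟨s, t, hst⟩ := Wop_ne_zero v
  have := congrFun (congrFun h s) t
  simp only [Matrix.smul_apply, smul_eq_mul] at this
  exact mul_right_cancel₀ hst this

def dec (M : QMat N) : ℂ × V N := by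
  classical exact if h : PauliDecomp M then h.choose else (1, 0)

def vec (M : QMat N) : V N := (dec M).2

def sgn (M : QMat N) : ℂ := (dec M).1

lemma dec_spec {M : QMat N} (h : IsPauli M) :
    (sgn M = 1 ∨ sgn M = -1) ∧ M = sgn M • Wop (vec M) := by
  have h' := isPauli_decomp h
  unfold sgn vec dec
  simp only [dif_pos h']
  exact h'.choose_spec

lemma sgn_ne_zero {M : QMat N} (h : IsPauli M) : sgn M ≠ 0 := by
  rcases (dec_spec h).1 with h'|h' <;> rw [h'] <;> norm_num

lemma vec_eq {M : QMat N} {ε : ℂ} {v : V N} (h : IsPauli M) (hε : ε ≠ 0)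
    (hM : M = ε • Wop v) : vec M = v := by
  have h1 := (dec_spec h).2
  exact (scalar_Wop_eq (sgn_ne_zero h) (h1.symm.trans hM)).1

/-- product of a list of Paulis is a nonzero scalar times `Wop` of the sum of vectors -/
lemma list_prod_eq (L : List (QMat N)) (h : ∀ A ∈ L, IsPauli A) :
    ∃ c : ℂ, c ≠ 0 ∧ L.prod = c • Wop ((L.map vec).sum) := by
  induction L with
  | nil =>
      exact ⟨1, one_ne_zero, by simp [Wop_zero]⟩
  | cons A L ih =>
      obtain ⟨c, hc, hL⟩ := ih (fun B hB => h B (List.mem_cons_of_mem _ hB))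
      have hA := h A List.mem_cons_self
      obtain ⟨μ, hμ, hWW⟩ := Wop_mul' (vec A) ((L.map vec).sum)
      refine ⟨sgn A * c * μ, mul_ne_zero (mul_ne_zero (sgn_ne_zero hA) hc) hμ, ?_⟩
      rw [List.map_cons, List.sum_cons]
      conv_lhs => rw [List.prod_cons, hL, (dec_spec hA).2, Matrix.mul_smul,
        Matrix.smul_mul, hWW, smul_smul, smul_smul]
      congr 1
      ring

lemma pauli_sq {A : QMat N} (h : IsPauli A) : A * A = 1 := by
  obtain ⟨hs, hA⟩ := dec_spec h
  rw [hA, Matrix.smul_mul, Matrix.mul_smul, Wop_sq, smul_smul]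
  rcases hs with h'|h' <;> rw [h'] <;> norm_num

end Kron

section Main

variable {N : ℕ} {S : Set (QMat N)}

lemma key_finset (hS : IsIndependentSet S) {t : Finset (QMat N)} (ht : ↑t ⊆ S)
    (hne : t.Nonempty) (hsum : ∑ A ∈ t, vec A = 0) : False := by
  have hP : ∀ A ∈ t.toList, IsPauli A := fun A hA =>
    hS.1.1 A (ht (Finset.mem_coe.2 (Finset.mem_toList.1 hA)))
  obtain ⟨c, hc, hprod⟩ := list_prod_eq t.toList hP
  have hsum' : (t.toList.map vec).sum = 0 := by
    rw [show (t.toList.map vec).sum = ∑ A ∈ t, vec A from by simp, hsum]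
  refine hS.2 t.toList ?_ t.nodup_toList
    (fun A hA => ht (Finset.mem_coe.2 (Finset.mem_toList.1 hA))) c ?_
  · simpa [Finset.toList_eq_nil] using hne.ne_empty
  · rw [hprod, hsum', Wop_zero]

lemma vec_injOn (hS : IsIndependentSet S) : Set.InjOn vec S := by
  intro A hA B hB hAB
  by_contra hne
  classical
  refine key_finset hS (t := {A, B}) ?_ ⟨A, by simp⟩ ?_
  · intro x hx
    simp only [Finset.coe_insert, Finset.coe_singleton, Set.mem_insert_iff,
      Set.mem_singleton_iff] at hx
    rcases hx with rfl|rfl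
    · exact hA
    · exact hB
  · rw [Finset.sum_pair hne, hAB, vadd_self]

lemma indep_finite (hS : IsIndependentSet S) : S.Finite :=
  Set.Finite.of_finite_image (Set.toFinite (vec '' S)) (vec_injOn hS)

lemma zmod2_elim (a : ZMod 2) : a = 0 ∨ a = 1 := by revert a; decide

lemma vecs_li (hS : IsIndependentSet S) :
    LinearIndependent (ZMod 2) (fun A : S => vec (A : QMat N)) := by
  rw [linearIndependent_iff']
  intro s g hsum i hi
  by_contra hgi
  classical
  refine key_finset hS (t := (s.filter fun i => g i ≠ 0).image Subtype.val) ?_ ?_ ?_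
  · rintro x hx
    obtain ⟨a, _, rfl⟩ := Finset.mem_image.1 (Finset.mem_coe.1 hx)
    exact a.2
  · exact ⟨i, Finset.mem_image_of_mem _ (Finset.mem_filter.2 ⟨hi, hgi⟩)⟩
  · rw [Finset.sum_image (fun a _ b _ h => Subtype.ext h)]
    calc ∑ j ∈ s.filter (fun i => g i ≠ 0), vec (j : QMat N)
        = ∑ j ∈ s.filter (fun i => g i ≠ 0), g j • vec (j : QMat N) := by
          refine Finset.sum_congr rfl fun j hj => ?_
          rcases zmod2_elim (g j) with h|h
          · exact absurd h (Finset.mem_filter.1 hj).2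
          · rw [h, one_smul]
      _ = ∑ j ∈ s, g j • vec (j : QMat N) := by
          refine Finset.sum_filter_of_ne fun j _ hne h0 => ?_
          rw [h0, zero_smul] at hne
          exact hne rfl
      _ = 0 := hsum

instance : Fact (Nat.Prime 2) := ⟨Nat.prime_two⟩

def Bform (N : ℕ) : LinearMap.BilinForm (ZMod 2) (V N) :=
  LinearMap.mk₂ (ZMod 2) sp
    (fun m m' n => by
      unfold sp sp1
      rw [← Finset.sum_add_distrib]
      exact Finset.sum_congr rfl fun j _ => by
        simp only [Pi.add_apply, Prod.fst_add, Prod.snd_add]; ring)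
    (fun c m n => by
      unfold sp sp1
      rw [smul_eq_mul, Finset.mul_sum]
      exact Finset.sum_congr rfl fun j _ => by
        simp only [Pi.smul_apply, Prod.smul_fst, Prod.smul_snd, smul_eq_mul]; ring)
    (fun m n n' => by
      unfold sp sp1
      rw [← Finset.sum_add_distrib]
      exact Finset.sum_congr rfl fun j _ => by
        simp only [Pi.add_apply, Prod.fst_add, Prod.snd_add]; ring)
    (fun c m n => by
      unfold sp sp1
      rw [smul_eq_mul, Finset.mul_sum]
      exact Finset.sum_congr rfl fun j _ => by
        simp only [Pi.smul_apply, Prod.smul_fst, Prod.smul_snd, smul_eq_mul]; ring)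

lemma Bform_apply (v w : V N) : Bform N v w = sp v w := rfl

lemma sp_comm (v w : V N) : sp v w = sp w v :=
  Finset.sum_congr rfl fun j _ => by unfold sp1; ring

lemma Bform_refl : (Bform N).IsRefl := fun v w h => by
  rw [Bform_apply, sp_comm]; rwa [Bform_apply] at h

lemma Bform_nondeg : (Bform N).Nondegenerate := by
  refine LinearMap.BilinForm.Nondegenerate.ofSeparatingLeft ?_
  intro v hv
  by_contra hv0
  obtain ⟨j, hj⟩ : ∃ j, v j ≠ 0 := by
    by_contra h'; push_neg at h'; exact hv0 (funext h')
  by_cases h1 : (v j).1 = 0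
  · have h2 : (v j).2 ≠ 0 := fun h2 => hj (Prod.ext h1 h2)
    have := hv (Function.update (0 : V N) j ((1:ZMod 2), (0:ZMod 2)))
    rw [Bform_apply] at this
    unfold sp at this
    rw [Finset.sum_eq_single j (fun b _ hb => by
      simp [sp1, Function.update_of_ne hb]) (fun h => absurd (Finset.mem_univ j) h)] at this
    simp [sp1, Function.update_self] at this
    exact h2 this
  · have := hv (Function.update (0 : V N) j ((0:ZMod 2), (1:ZMod 2)))
    rw [Bform_apply] at this
    unfold sp at this
    rw [Finset.sum_eq_single j (fun b _ hb => by
      simp [sp1, Function.update_of_ne hb]) (fun h => absurd (Finset.mem_univ j) h)] at this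
    simp [sp1, Function.update_self] at this
    exact h1 this

lemma finrank_V : Module.finrank (ZMod 2) (V N) = 2 * N := by
  rw [Module.finrank_pi_fintype]
  simp [Module.finrank_prod, Module.finrank_self]
  omega

lemma span_isotropic {G : Set (V N)} (hG : ∀ x ∈ G, ∀ y ∈ G, sp x y = 0) :
    ∀ x ∈ Submodule.span (ZMod 2) G, ∀ y ∈ Submodule.span (ZMod 2) G, sp x y = 0 := by
  have step1 : ∀ y ∈ G, ∀ x ∈ Submodule.span (ZMod 2) G, sp x y = 0 := by
    intro y hy x hx
    have hle : Submodule.span (ZMod 2) G ≤ LinearMap.ker ((Bform N).flip y) :=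
      Submodule.span_le.2 fun g hg => by
        simp only [SetLike.mem_coe, LinearMap.mem_ker, LinearMap.flip_apply]
        exact hG g hg y hy
    exact hle hx
  intro x hx y hy
  have hle : Submodule.span (ZMod 2) G ≤ LinearMap.ker (Bform N x) :=
    Submodule.span_le.2 fun g hg => by
      simp only [SetLike.mem_coe, LinearMap.mem_ker]
      rw [Bform_apply]
      exact step1 g hg x hx
  exact hle hy

lemma pairwise_commute_list {T : Set (QMat N)}
    (hc : ∀ A ∈ T, ∀ B ∈ T, A * B = B * A) :
    ∀ L : List (QMat N), (∀ A ∈ L, A ∈ T) → L.Pairwise Commute := by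
  intro L
  induction L with
  | nil => exact fun _ => List.Pairwise.nil
  | cons a L ih =>
      intro h
      exact List.Pairwise.cons
        (fun b hb => hc a (h a List.mem_cons_self) b (h b (List.mem_cons_of_mem _ hb)))
        (ih fun A hA => h A (List.mem_cons_of_mem _ hA))

lemma reduce_list {T : Set (QMat N)} (hP : ∀ A ∈ T, IsPauli A)
    (hc : ∀ A ∈ T, ∀ B ∈ T, A * B = B * A) :
    ∀ L : List (QMat N), (∀ A ∈ L, A ∈ T) →
      ∃ L' : List (QMat N), L'.Nodup ∧ (∀ A ∈ L', A ∈ T) ∧ L'.prod = L.prod := by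
  intro L
  induction L with
  | nil => exact fun _ => ⟨[], List.nodup_nil, by simp, rfl⟩
  | cons a L ih =>
      intro hmem
      obtain ⟨L', h1, h2, h3⟩ := ih (fun A hA => hmem A (List.mem_cons_of_mem _ hA))
      have haT : a ∈ T := hmem a List.mem_cons_self
      by_cases ha : a ∈ L'
      · refine ⟨L'.erase a, h1.erase a, fun A hA => h2 A (List.mem_of_mem_erase hA), ?_⟩
        have hperm : List.Perm L' (a :: L'.erase a) := List.perm_cons_erase ha
        have hpair : L'.Pairwise Commute := pairwise_commute_list hc L' h2
        have he : L'.prod = a * (L'.erase a).prod := by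
          rw [hperm.prod_eq' hpair, List.prod_cons]
        rw [List.prod_cons, ← h3, he, ← mul_assoc, pauli_sq (hP a haT), one_mul]
      · exact ⟨a :: L', List.nodup_cons.2 ⟨ha, h1⟩,
          fun A hA => (List.mem_cons.1 hA).elim (fun h => h ▸ haT) (h2 A),
          by rw [List.prod_cons, List.prod_cons, h3]⟩

lemma setup_rank (hS : IsIndependentSet S) :
    Module.finrank (ZMod 2) (Submodule.span (ZMod 2) (vec '' S)) = S.ncard ∧
    (∀ x ∈ Submodule.span (ZMod 2) (vec '' S), ∀ y ∈ Submodule.span (ZMod 2) (vec '' S),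
      sp x y = 0) := by
  classical
  have hfin : S.Finite := indep_finite hS
  have hGfin : (vec '' S).Finite := hfin.image _
  haveI : Fintype (vec '' S) := hGfin.fintype
  have hli : LinearIndependent (ZMod 2) ((↑) : (vec '' S) → V N) := by
    rw [show (vec '' S) = Set.range (fun A : S => vec (A : QMat N)) from
      Set.image_eq_range _ _]
    exact (linearIndepOn_id_range_iff (vecs_li hS).injective).2 (vecs_li hS)
  constructor
  · rw [finrank_span_set_eq_card hli, ← Set.ncard_eq_toFinset_card']
    exact Set.ncard_image_of_injOn (vec_injOn hS)
  · apply span_isotropic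
    rintro x ⟨A, hA, rfl⟩ y ⟨B, hB, rfl⟩
    have hAB := hS.1.2.1 A hA B hB
    have hPA := hS.1.1 A hA
    have hPB := hS.1.1 B hB
    apply sp_of_commute
    have e1 : A * B = (sgn A * sgn B) • (Wop (vec A) * Wop (vec B)) := by
      conv_lhs => rw [(dec_spec hPA).2, (dec_spec hPB).2]
      rw [Matrix.smul_mul, Matrix.mul_smul, smul_smul]
    have e2 : B * A = (sgn A * sgn B) • (Wop (vec B) * Wop (vec A)) := by
      conv_lhs => rw [(dec_spec hPB).2, (dec_spec hPA).2]
      rw [Matrix.smul_mul, Matrix.mul_smul, smul_smul, mul_comm (sgn B) (sgn A)]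
    have h1 : (sgn A * sgn B) • (Wop (vec A) * Wop (vec B))
        = (sgn A * sgn B) • (Wop (vec B) * Wop (vec A)) := by
      rw [← e1, ← e2, hAB]
    exact smul_right_injective (QMat N) (mul_ne_zero (sgn_ne_zero hPA) (sgn_ne_zero hPB)) h1

lemma ncard_le_N (hS : IsIndependentSet S) : S.ncard ≤ N := by
  obtain ⟨hrank, hiso⟩ := setup_rank hS
  set W := Submodule.span (ZMod 2) (vec '' S)
  have hWle : W ≤ (Bform N).orthogonal W := fun x hx =>
    (LinearMap.BilinForm.mem_orthogonal_iff).2 fun y hy => hiso y hy x hx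
  have horth : Module.finrank (ZMod 2) ((Bform N).orthogonal W)
      = 2 * N - Module.finrank (ZMod 2) W := by
    rw [LinearMap.BilinForm.finrank_orthogonal Bform_nondeg W, finrank_V]
  have hmono : Module.finrank (ZMod 2) W
      ≤ Module.finrank (ZMod 2) ((Bform N).orthogonal W) :=
    Submodule.finrank_mono hWle
  have hle : Module.finrank (ZMod 2) W ≤ Module.finrank (ZMod 2) (V N) :=
    Submodule.finrank_le W
  rw [finrank_V] at hle
  omega

lemma extend_step (hS : IsIndependentSet S) (hcard : S.ncard < N) :
    ∃ M : QMat N, M ∉ S ∧ IsIndependentSet (insert M S) := by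
  classical
  obtain ⟨hrank, hiso⟩ := setup_rank hS
  set W := Submodule.span (ZMod 2) (vec '' S) with hW
  have hWle : W ≤ (Bform N).orthogonal W := fun x hx =>
    (LinearMap.BilinForm.mem_orthogonal_iff).2 fun y hy => hiso y hy x hx
  have horth : Module.finrank (ZMod 2) ((Bform N).orthogonal W)
      = 2 * N - Module.finrank (ZMod 2) W := by
    rw [LinearMap.BilinForm.finrank_orthogonal Bform_nondeg W, finrank_V]
  have hlt : W < (Bform N).orthogonal W := by
    refine lt_of_le_of_ne hWle fun heq => ?_
    rw [← heq, hrank] at horth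
    omega
  obtain ⟨u, hu_orth, hu_not⟩ := SetLike.exists_of_lt hlt
  set M := Wop u with hMdef
  have hMP : IsPauli M := decomp_isPauli ⟨(1, u), Or.inl rfl, (one_smul ℂ _).symm⟩
  have hvecM : vec M = u := vec_eq hMP one_ne_zero (one_smul ℂ _).symm
  have hMnotS : M ∉ S := fun hM =>
    hu_not (by rw [← hvecM]; exact Submodule.subset_span ⟨M, hM, rfl⟩)
  have hspS : ∀ A ∈ S, sp (vec A) u = 0 := fun A hA =>
    (LinearMap.BilinForm.mem_orthogonal_iff).1 hu_orth (vec A)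
      (Submodule.subset_span ⟨A, hA, rfl⟩)
  have hcommM : ∀ A ∈ S, A * M = M * A := by
    intro A hA
    have hPA := hS.1.1 A hA
    conv_lhs => rw [(dec_spec hPA).2]
    conv_rhs => rw [(dec_spec hPA).2]
    rw [Matrix.smul_mul, Matrix.mul_smul, Wop_commute_of_sp (hspS A hA)]
  have hcomm' : ∀ A ∈ insert M S, ∀ B ∈ insert M S, A * B = B * A := by
    rintro A (rfl|hA) B (rfl|hB)
    · rfl
    · exact (hcommM B hB).symm
    · exact hcommM A hA
    · exact hS.1.2.1 A hA B hB
  have hPall : ∀ A ∈ insert M S, IsPauli A := by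
    rintro A (rfl|hA)
    · exact hMP
    · exact hS.1.1 A hA
  have hTind : ∀ L : List (QMat N), L ≠ [] → L.Nodup → (∀ A ∈ L, A ∈ insert M S) →
      ∀ c : ℂ, L.prod ≠ c • (1 : QMat N) := by
    intro L hne hnd hmem c hprod
    obtain ⟨c', hc', hLeq⟩ := list_prod_eq L (fun A hA => hPall A (hmem A hA))
    have h0 : (L.map vec).sum = 0 := by
      have heq : c' • Wop ((L.map vec).sum) = c • Wop 0 := by
        rw [← hLeq, hprod, Wop_zero]
      exact (scalar_Wop_eq hc' heq).1
    by_cases hML : M ∈ L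
    · have hperm : List.Perm (L.map vec) ((M :: L.erase M).map vec) :=
        (List.perm_cons_erase hML).map vec
      have hsum2 : (L.map vec).sum = vec M + ((L.erase M).map vec).sum := by
        rw [hperm.sum_eq, List.map_cons, List.sum_cons]
      have hu_eq : u = ((L.erase M).map vec).sum := by
        apply eq_of_vadd_eq_zero
        rw [← hvecM, ← hsum2]
        exact h0
      apply hu_not
      rw [hu_eq]
      apply list_sum_mem
      intro x hx
      obtain ⟨A, hA, rfl⟩ := List.mem_map.1 hx
      have hAS : A ∈ S := by
        have hAne : A ≠ M := ((List.Nodup.mem_erase_iff hnd).1 hA).1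
        exact ((hmem A (List.mem_of_mem_erase hA)).resolve_left hAne)
      exact Submodule.subset_span ⟨A, hAS, rfl⟩
    · refine hS.2 L hne hnd (fun A hA => ?_) c hprod
      exact (hmem A hA).resolve_left (fun h => hML (h ▸ hA))
  have hclosure : (-1 : QMat N) ∉ Submonoid.closure (insert M S) := by
    intro hmem1
    obtain ⟨L, hLmem, hLprod⟩ := Submonoid.exists_list_of_mem_closure hmem1
    obtain ⟨L', hnd, hmem', hprod'⟩ := reduce_list hPall hcomm' L hLmem
    rcases eq_or_ne L' ([] : List (QMat N)) with rfl|hne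
    · have h1 : (1 : QMat N) = -1 := by simpa using hprod'.trans hLprod
      have := congrFun (congrFun h1 (fun _ => 0)) (fun _ => 0)
      simp only [Matrix.one_apply, Matrix.neg_apply, if_pos rfl] at this
      norm_num at this
    · refine hTind L' hne hnd hmem' (-1) ?_
      rw [hprod', hLprod]
      exact (neg_one_smul ℂ (1 : QMat N)).symm
  exact ⟨M, hMnotS, ⟨⟨hPall, hcomm', hclosure⟩, hTind⟩⟩

end Main

end Stab

theorem statement2' (N : ℕ) (S : Set (QMat N))
    (hS : IsIndependentSet S) :
    ∃ T : Set (QMat N), S ⊆ T ∧ IsCompleteSet T := by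
  have key : ∀ k : ℕ, ∀ S : Set (QMat N), IsIndependentSet S → N - S.ncard ≤ k →
      ∃ T : Set (QMat N), S ⊆ T ∧ IsCompleteSet T := by
    intro k
    induction k with
    | zero =>
        intro S hS h0
        have h1 : S.ncard ≤ N := Stab.ncard_le_N hS
        exact ⟨S, subset_rfl, hS, by omega⟩
    | succ k ih =>
        intro S hS hk
        by_cases h : S.ncard < N
        · obtain ⟨M, hM, hMS⟩ := Stab.extend_step hS h
          have hins : (insert M S).ncard = S.ncard + 1 :=
            Set.ncard_insert_of_notMem hM (Stab.indep_finite hS)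
          obtain ⟨T, hT1, hT2⟩ := ih (insert M S) hMS (by omega)
          exact ⟨T, (Set.subset_insert M S).trans hT1, hT2⟩
        · have h1 : S.ncard ≤ N := Stab.ncard_le_N hS
          exact ⟨S, subset_rfl, hS, by omega⟩
  exact key N S hS (by omega)


/-- every independent set of stabilizers extends to a complete one. -/
theorem statement2 (N : ℕ) (hN : 0 < N) (S : Set (QMat N))
    (hS : IsIndependentSet S) :
    ∃ T : Set (QMat N), S ⊆ T ∧ IsCompleteSet T :=
  statement2' N S hS
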